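/- For every fixed k ∈ ℕ, (n+1)(α_{n,k+1} − α_{n,k}) → 1/(2p) as n → ∞, and (n+1)(α_{n,n−k+1} − α_{n,n−k}) → 1/(2(1−p)) as n → ∞. Equivalently, α_{n,k+1} = α_{n,k} + 1/(2p(n+1)) + o(1/(n+1)) and α_{n,n−k+1} = α_{n,n−k} + 1/(2(1−p)(n+1)) + o(1/(n+1)). -/

import Mathlib

open Filter

/-- Abstract convergence lemma: if `t n 0` satisfies the boundary recursion
`t (n+1) 0 = 1/2 + (1-q) t n 0` and interior columns satisfy
`t (n+1) (k+1) = q * t n k + (1-q) * t n (k+1)` for `k+1 ≤ n`, with `0 < q < 1`,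
then every column tends to `1/(2q)`. -/
lemma spacings_abstract_key (q : ℝ) (hq : 0 < q) (hq1 : q < 1) (t : ℕ → ℕ → ℝ)
    (h0 : ∀ n : ℕ, t (n + 1) 0 = 1 / 2 + (1 - q) * t n 0)
    (hint : ∀ n k : ℕ, k + 1 ≤ n → t (n + 1) (k + 1) = q * t n k + (1 - q) * t n (k + 1)) :
    ∀ K : ℕ, Tendsto (fun n => t n K) atTop (nhds (1 / (2 * q))) := by
  intro K
  set L : ℝ := 1 / (2 * q) with hL
  set r : ℝ := 1 - q with hr
  have hr0 : 0 < r := by simp only [hr]; linarith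
  have hr1 : r < 1 := by simp only [hr]; linarith
  set e : ℕ → ℕ → ℝ := fun n k => t n k - L with he
  have he0 : ∀ n, e (n + 1) 0 = r * e n 0 := by
    intro n
    simp only [he, h0 n, hr, hL]
    field_simp
    ring
  have heint : ∀ n k, k + 1 ≤ n → e (n + 1) (k + 1) = q * e n k + r * e n (k + 1) := by
    intro n k h
    simp only [he, hint n k h, hr]
    ring
  set B0 : ℝ := ∑ j ∈ Finset.range (K + 1), |e j j| with hB0def
  have hB0nn : 0 ≤ B0 := Finset.sum_nonneg fun _ _ => abs_nonneg _
  have hBj : ∀ j, j ≤ K → |e j j| ≤ B0 := by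
    intro j hj
    exact Finset.single_le_sum (f := fun j => |e j j|) (fun _ _ => abs_nonneg _)
      (Finset.mem_range.mpr (by omega))
  set B : ℝ := B0 / q ^ K with hBdef
  have hBnn : 0 ≤ B := div_nonneg hB0nn (pow_pos hq K).le
  have hB : ∀ j, j ≤ K → |e j j| ≤ B * q ^ j := by
    intro j hj
    have h1 : q ^ K ≤ q ^ j := pow_le_pow_of_le_one hq.le hq1.le hj
    have h2 : 0 < q ^ K := pow_pos hq K
    have : B0 ≤ B * q ^ j := by
      rw [hBdef, div_mul_eq_mul_div, le_div_iff₀ h2]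
      nlinarith
    exact (hBj j hj).trans this
  have key : ∀ n, ∀ j, j ≤ n → j ≤ K →
      |e n j| ≤ B * q ^ j * (n.choose j : ℝ) * r ^ (n - j) := by
    intro n
    induction n with
    | zero =>
      intro j hj _
      interval_cases j
      simpa using hB 0 (Nat.zero_le K)
    | succ n ih =>
      intro j hjn hjK
      match j with
      | 0 =>
        rw [he0 n, abs_mul, abs_of_pos hr0]
        have h1 := ih 0 (Nat.zero_le n) (Nat.zero_le K)
        have : r * |e n 0| ≤ r * (B * q ^ 0 * (n.choose 0 : ℝ) * r ^ (n - 0)) :=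
          mul_le_mul_of_nonneg_left h1 hr0.le
        calc r * |e n 0| ≤ r * (B * q ^ 0 * (n.choose 0 : ℝ) * r ^ (n - 0)) := this
          _ = B * q ^ 0 * ((n + 1).choose 0 : ℝ) * r ^ (n + 1 - 0) := by
              simp [pow_succ]; ring
      | (m + 1) =>
        by_cases hc : m + 1 ≤ n
        · rw [heint n m hc]
          have h1 := ih m (by omega) (by omega)
          have h2 := ih (m + 1) hc hjK
          have habs : |q * e n m + r * e n (m + 1)| ≤ q * |e n m| + r * |e n (m + 1)| := by
            calc |q * e n m + r * e n (m + 1)| ≤ |q * e n m| + |r * e n (m + 1)| := abs_add_le _ _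
              _ = q * |e n m| + r * |e n (m + 1)| := by
                  rw [abs_mul, abs_mul, abs_of_pos hq, abs_of_pos hr0]
          have hstep : q * |e n m| + r * |e n (m + 1)| ≤
              q * (B * q ^ m * (n.choose m : ℝ) * r ^ (n - m)) +
              r * (B * q ^ (m + 1) * (n.choose (m + 1) : ℝ) * r ^ (n - (m + 1))) := by
            gcongr
          have hsub1 : n - m = (n - (m + 1)) + 1 := by omega
          have hsub2 : n + 1 - (m + 1) = (n - (m + 1)) + 1 := by omega
          have hch : ((n + 1).choose (m + 1) : ℝ) = (n.choose m : ℝ) + (n.choose (m + 1) : ℝ) := by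
            rw [Nat.choose_succ_succ]; push_cast; ring
          calc |q * e n m + r * e n (m + 1)| ≤ _ := habs.trans hstep
            _ = B * q ^ (m + 1) * ((n + 1).choose (m + 1) : ℝ) * r ^ (n + 1 - (m + 1)) := by
                rw [hsub1, hsub2, hch]; ring
        · have hm : m + 1 = n + 1 := by omega
          have := hB (m + 1) hjK
          rw [hm] at this ⊢
          have hch : ((n + 1).choose (n + 1) : ℝ) = 1 := by simp
          have hsub : n + 1 - (n + 1) = 0 := by omega
          rw [hch, hsub]
          simpa using this
  have hg : Tendsto (fun n : ℕ => (B * q ^ K / r ^ K) * ((n : ℝ) ^ K * r ^ n)) atTop (nhds 0) := by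
    have h := tendsto_pow_const_mul_const_pow_of_lt_one K hr0.le hr1
    simpa using h.const_mul (B * q ^ K / r ^ K)
  have hlim : Tendsto (fun n => e n K) atTop (nhds 0) := by
    apply squeeze_zero_norm' _ hg
    filter_upwards [eventually_ge_atTop K] with n hn
    have h1 := key n K hn le_rfl
    have hch : (n.choose K : ℝ) ≤ (n : ℝ) ^ K := by
      exact_mod_cast Nat.choose_le_pow n K
    have hrK : r ^ (n - K) * r ^ K = r ^ n := by
      rw [← pow_add]; congr 1; omega
    have h2 : B * q ^ K * (n.choose K : ℝ) * r ^ (n - K) ≤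
        B * q ^ K * (n : ℝ) ^ K * r ^ (n - K) := by gcongr
    calc ‖e n K‖ = |e n K| := rfl
      _ ≤ B * q ^ K * (n : ℝ) ^ K * r ^ (n - K) := h1.trans h2
      _ = B * q ^ K / r ^ K * ((n : ℝ) ^ K * r ^ n) := by
          rw [← hrK]; field_simp
  have : Tendsto (fun n => e n K + L) atTop (nhds (0 + L)) := hlim.add_const L
  simpa [he] using this

/-- For the normalized break points of the fragmentation with constant splitting
proportion `p` and boundary `a_{n,0} = -(n+1)/2`, `a_{n,n+1} = (n+1)/2`, the spacings near
the left end converge to `1/(2p)` and the spacings near the right end converge to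
`1/(2(1-p))`, after rescaling by `n+1`. -/
theorem spacings_limit
    (p : ℝ) (hp : 0 < p) (hp1 : p < 1)
    (α : ℕ → ℕ → ℝ)
    (hα0 : ∀ n : ℕ, α n 0 = 0)
    (hα1 : ∀ n : ℕ, α n (n + 1) = 1)
    (hαrec : ∀ n : ℕ, 1 ≤ n → ∀ k : ℕ, 1 ≤ k → k ≤ n →
      α n k = 1 / (2 * (n + 1)) + (n / (n + 1)) * (p * α (n - 1) (k - 1) + (1 - p) * α (n - 1) k)) :
    ∀ k : ℕ,
      Tendsto (fun n : ℕ => ((n : ℝ) + 1) * (α n (k + 1) - α n k)) atTop (nhds (1 / (2 * p))) ∧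
      Tendsto (fun n : ℕ => ((n : ℝ) + 1) * (α n (n - k + 1) - α n (n - k))) atTop
        (nhds (1 / (2 * (1 - p)))) := by
  have hn2 : ∀ n : ℕ, ((n : ℝ) + 1 + 1) ≠ 0 := by
    intro n; positivity
  -- left spacings
  set tL : ℕ → ℕ → ℝ := fun n k => ((n : ℝ) + 1) * (α n (k + 1) - α n k) with htL
  have h0L : ∀ n : ℕ, tL (n + 1) 0 = 1 / 2 + (1 - p) * tL n 0 := by
    intro n
    have h1 := hαrec (n + 1) (by omega) 1 (by omega) (by omega)
    simp only [Nat.add_sub_cancel, Nat.sub_self] at h1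
    simp only [htL, hα0, h1]
    push_cast
    field_simp
    ring
  have hintL : ∀ n k : ℕ, k + 1 ≤ n →
      tL (n + 1) (k + 1) = p * tL n k + (1 - p) * tL n (k + 1) := by
    intro n k hk
    have h1 := hαrec (n + 1) (by omega) (k + 2) (by omega) (by omega)
    have h2 := hαrec (n + 1) (by omega) (k + 1) (by omega) (by omega)
    simp only [Nat.add_sub_cancel] at h1 h2
    simp only [htL, h1, h2]
    push_cast
    field_simp
    ring
  -- right spacings
  set tR : ℕ → ℕ → ℝ := fun n k => ((n : ℝ) + 1) * (α n (n - k + 1) - α n (n - k)) with htR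
  have h0R : ∀ n : ℕ, tR (n + 1) 0 = 1 / 2 + (1 - (1 - p)) * tR n 0 := by
    intro n
    have h1 := hαrec (n + 1) (by omega) (n + 1) (by omega) (by omega)
    simp only [Nat.add_sub_cancel] at h1
    simp only [htR, Nat.sub_zero, hα1, h1]
    push_cast
    field_simp
    ring
  have hintR : ∀ n k : ℕ, k + 1 ≤ n →
      tR (n + 1) (k + 1) = (1 - p) * tR n k + (1 - (1 - p)) * tR n (k + 1) := by
    intro n k hk
    have e1 : n + 1 - (k + 1) = n - k := by omega
    have e2 : n - (k + 1) + 1 = n - k := by omega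
    have h1 := hαrec (n + 1) (by omega) (n - k + 1) (by omega) (by omega)
    have h2 := hαrec (n + 1) (by omega) (n - k) (by omega) (by omega)
    have e3 : n - k + 1 - 1 = n - k := by omega
    have e4 : n - k - 1 = n - (k + 1) := by omega
    have e5 : n - k - 1 + 1 = n - k := by omega
    simp only [Nat.add_sub_cancel, e3, e4] at h1 h2
    simp only [htR, e1, e2, h1, h2]
    push_cast
    field_simp
    ring
  intro k
  constructor
  · exact spacings_abstract_key p hp hp1 tL h0L hintL k
  · have h1p : 0 < 1 - p := by linarith
    have h1p1 : 1 - p < 1 := by linarith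
    exact spacings_abstract_key (1 - p) h1p h1p1 tR h0R hintR k
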